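/- Fix ε with 0 < ε ≤ 1/2 and an integer N ≥ 1. For each integer n with 1 ≤ n ≤ N, let γ(n) > 0 be the unique solution of n·(ln(1+γ) − γ/(1+γ)) = 2ε². Then n·γ(n) is maximized over {1, …, N} at n = N. -/

import Mathlib

noncomputable def ff (x : ℝ) : ℝ := Real.log (1+x) - x/(1+x)

lemma ff_hasDeriv {x : ℝ} (hx : 0 < 1 + x) : HasDerivAt ff (x/(1+x)^2) x := by
  have h1 : HasDerivAt (fun y : ℝ => 1 + y) 1 x := by
    simpa using (hasDerivAt_id x).const_add 1
  have hlog : HasDerivAt (fun y => Real.log (1+y)) (1/(1+x)) x := by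
    simpa [Function.comp_def] using (Real.hasDerivAt_log hx.ne').comp x h1
  have hdiv : HasDerivAt (fun y : ℝ => y/(1+y)) (1/(1+x)^2) x := by
    have := (hasDerivAt_id x).div h1 hx.ne'
    refine this.congr_deriv ?_
    field_simp
    simp
  have h := hlog.sub hdiv
  refine h.congr_deriv ?_
  field_simp
  ring

noncomputable def FF (x : ℝ) : ℝ := (2*x^2+x)/(1+x)^2 - Real.log (1+x)

lemma FF_hasDeriv {x : ℝ} (hx : 0 < 1 + x) : HasDerivAt FF ((x - x^2)/(1+x)^3) x := by
  have h1 : HasDerivAt (fun y : ℝ => 1 + y) 1 x := by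
    simpa using (hasDerivAt_id x).const_add 1
  have hlog : HasDerivAt (fun y => Real.log (1+y)) (1/(1+x)) x := by
    simpa [Function.comp_def] using (Real.hasDerivAt_log hx.ne').comp x h1
  have hnum : HasDerivAt (fun y : ℝ => 2*y^2+y) (4*x+1) x := by
    have h2 : HasDerivAt (fun y : ℝ => y^2) (2*x) x := by
      simpa using hasDerivAt_pow 2 x
    have := (h2.const_mul 2).add (hasDerivAt_id x)
    exact this.congr_deriv (by ring)
  have hden : HasDerivAt (fun y : ℝ => (1+y)^2) (2*(1+x)) x := by
    have := (h1.pow 2)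
    simpa [Pi.pow_def] using this
  have hq : HasDerivAt (fun y : ℝ => (2*y^2+y)/(1+y)^2)
      (((4*x+1)*(1+x)^2 - (2*x^2+x)*(2*(1+x)))/((1+x)^2)^2) x := by
    exact hnum.div hden (by positivity)
  have h := hq.sub hlog
  refine h.congr_deriv ?_
  field_simp
  ring

lemma ff_mono : StrictMonoOn ff (Set.Ici (0:ℝ)) := by
  apply strictMonoOn_of_deriv_pos (convex_Ici 0)
  · intro x hx
    exact (ff_hasDeriv (by simp at hx; linarith)).continuousAt.continuousWithinAt
  · intro x hx
    rw [interior_Ici] at hx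
    simp only [Set.mem_Ioi] at hx
    rw [(ff_hasDeriv (by linarith)).deriv]
    positivity

lemma ff_pos {x : ℝ} (hx : 0 < x) : 0 < ff x := by
  have h0 : ff 0 = 0 := by simp [ff]
  have := ff_mono (Set.self_mem_Ici) (Set.mem_Ici.2 hx.le) hx
  linarith

lemma log_le_aux {x : ℝ} (hx : 0 < x) (y : ℝ) : Real.log x ≤ y - 1 + x / Real.exp y := by
  have h := Real.log_le_sub_one_of_pos (show 0 < x / Real.exp y by positivity)
  rw [Real.log_div hx.ne' (Real.exp_ne_zero _), Real.log_exp] at h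
  linarith

lemma log_ge_aux {x : ℝ} (hx : 0 < x) (y : ℝ) : y + 1 - Real.exp y / x ≤ Real.log x := by
  have h := Real.log_le_sub_one_of_pos (show 0 < Real.exp y / x by positivity)
  rw [Real.log_div (Real.exp_ne_zero _) hx.ne', Real.log_exp] at h
  linarith

lemma exp5_eq : Real.exp 5 = Real.exp 1 ^ 5 := by
  rw [← Real.exp_nat_mul]; norm_num

lemma exp5_lt : Real.exp 5 < 2.7182818286^5 := by
  rw [exp5_eq]
  exact pow_lt_pow_left₀ Real.exp_one_lt_d9 (Real.exp_pos 1).le (by norm_num)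

lemma exp5_gt : 2.7182818283^5 < Real.exp 5 := by
  rw [exp5_eq]
  exact pow_lt_pow_left₀ Real.exp_one_gt_d9 (by norm_num) (by norm_num)

lemma exp2_eq : Real.exp 2 = Real.exp 1 ^ 2 := by
  rw [← Real.exp_nat_mul]; norm_num

lemma exp2_gt : 2.7182818283^2 < Real.exp 2 := by
  rw [exp2_eq]
  exact pow_lt_pow_left₀ Real.exp_one_gt_d9 (by norm_num) (by norm_num)

-- L1
lemma L1 : Real.log 3 ≤ 10/9 := by
  have h := log_le_aux (show (0:ℝ) < 3 by norm_num) 1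
  have he : (2.7182818283:ℝ) < Real.exp 1 := Real.exp_one_gt_d9
  have hp : (0:ℝ) < Real.exp 1 := Real.exp_pos 1
  have : (3:ℝ) / Real.exp 1 ≤ 3 / 2.7182818283 := by
    apply div_le_div_of_nonneg_left (by norm_num) (by norm_num) he.le
  calc Real.log 3 ≤ 1 - 1 + 3 / Real.exp 1 := h
    _ ≤ 1 - 1 + 3 / 2.7182818283 := by linarith
    _ ≤ 10/9 := by norm_num

-- L2
lemma L2 : (11:ℝ)/12 ≤ Real.log 3 := by
  have h := log_ge_aux (show (0:ℝ) < 3 by norm_num) 1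
  have he : Real.exp 1 < 2.7182818286 := Real.exp_one_lt_d9
  have : Real.exp 1 / 3 ≤ 2.7182818286 / 3 := by linarith
  calc (11:ℝ)/12 ≤ 1 + 1 - 2.7182818286/3 := by norm_num
    _ ≤ 1 + 1 - Real.exp 1 / 3 := by linarith
    _ ≤ Real.log 3 := h

-- L3
lemma L3 : (75:ℝ)/92 ≤ Real.log (23/10) := by
  have hp : (0:ℝ) < ((23:ℝ)/10)^6 := by norm_num
  have h := log_ge_aux hp 5
  rw [Real.log_pow] at h
  push_cast at h
  have hd : Real.exp 5 / ((23:ℝ)/10)^6 ≤ 2.7182818286^5 / ((23:ℝ)/10)^6 :=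
    (div_le_div_iff_of_pos_right hp).2 exp5_lt.le
  have hn : (6:ℝ) * (75/92) ≤ 5 + 1 - 2.7182818286^5 / ((23:ℝ)/10)^6 := by norm_num
  linarith

-- L4
lemma L4 : Real.log (23/10) ≤ 13/23 + 1222/4489 := by
  have hp : (0:ℝ) < ((23:ℝ)/10)^6 := by norm_num
  have h := log_le_aux hp 5
  rw [Real.log_pow] at h
  push_cast at h
  have hd : ((23:ℝ)/10)^6 / Real.exp 5 ≤ ((23:ℝ)/10)^6 / 2.7182818283^5 :=
    div_le_div_of_nonneg_left (by norm_num) (by positivity) exp5_gt.le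
  have hn : ((23:ℝ)/10)^6 / 2.7182818283^5 ≤ 6 * (13/23 + 1222/4489) - (5 - 1) := by
    rw [div_le_iff₀ (by positivity)]
    norm_num
  linarith

-- L5
lemma L5 : (161:ℝ)/134 ≤ Real.log (67/20) := by
  have hp : (0:ℝ) < ((67:ℝ)/20)^4 := by norm_num
  have h := log_ge_aux hp 5
  rw [Real.log_pow] at h
  push_cast at h
  have hd : Real.exp 5 / ((67:ℝ)/20)^4 ≤ 2.7182818286^5 / ((67:ℝ)/20)^4 :=
    (div_le_div_iff_of_pos_right hp).2 exp5_lt.le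
  have hn : (4:ℝ) * (161/134) ≤ 5 + 1 - 2.7182818286^5 / ((67:ℝ)/20)^4 := by
    rw [div_le_iff₀ (by positivity)] at *
    norm_num
  linarith

-- L6
lemma L6 : -(182:ℝ)/69 ≤ 13 * Real.log 3 - 20 * Real.log (23/10) := by
  have hX : (0:ℝ) < (3:ℝ)^13 / ((23:ℝ)/10)^20 := by positivity
  have h := log_ge_aux hX (-2)
  rw [Real.log_div (by positivity) (by positivity), Real.log_pow, Real.log_pow] at h
  push_cast at h
  have he2 : Real.exp (-2) ≤ (2.7182818283^2 : ℝ)⁻¹ := by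
    rw [Real.exp_neg]
    exact inv_anti₀ (by norm_num) exp2_gt.le
  have hd : Real.exp (-2) / ((3:ℝ)^13 / ((23:ℝ)/10)^20) ≤
      (2.7182818283^2 : ℝ)⁻¹ / ((3:ℝ)^13 / ((23:ℝ)/10)^20) :=
    (div_le_div_iff_of_pos_right hX).2 he2
  have hn : (2.7182818283^2 : ℝ)⁻¹ / ((3:ℝ)^13 / ((23:ℝ)/10)^20) ≤ -2 + 1 - (-182/69) := by
    rw [div_le_iff₀ hX, inv_le_iff_one_le_mul₀ (by norm_num)]
    norm_num
  linarith

lemma FF_cont : ∀ x ∈ Set.Icc (0:ℝ) 2, ContinuousWithinAt FF (Set.Icc (0:ℝ) 2) x := by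
  intro x hx
  exact (FF_hasDeriv (by simp at hx; linarith [hx.1])).continuousAt.continuousWithinAt

lemma FF_nonneg : ∀ x ∈ Set.Icc (0:ℝ) 2, 0 ≤ FF x := by
  have h0 : FF 0 = 0 := by simp [FF]
  have h2 : 0 ≤ FF 2 := by
    have : FF 2 = 10/9 - Real.log 3 := by norm_num [FF]
    rw [this]; linarith [L1]
  have hmono : MonotoneOn FF (Set.Icc (0:ℝ) 1) := by
    apply monotoneOn_of_deriv_nonneg (convex_Icc 0 1)
    · intro x hx
      exact (FF_hasDeriv (by simp at hx; linarith [hx.1])).continuousAt.continuousWithinAt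
    · intro x hx
      rw [interior_Icc] at hx
      exact ((FF_hasDeriv (by simp at hx; linarith [hx.1])).differentiableAt).differentiableWithinAt
    · intro x hx
      rw [interior_Icc] at hx
      simp only [Set.mem_Ioo] at hx
      rw [(FF_hasDeriv (by linarith [hx.1])).deriv]
      have h1 : 0 ≤ x - x^2 := by nlinarith [hx.1, hx.2]
      exact div_nonneg h1 (pow_nonneg (by linarith [hx.1]) 3)
  have hanti : AntitoneOn FF (Set.Icc (1:ℝ) 2) := by
    apply antitoneOn_of_deriv_nonpos (convex_Icc 1 2)
    · intro x hx
      exact (FF_hasDeriv (by simp at hx; linarith [hx.1])).continuousAt.continuousWithinAt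
    · intro x hx
      rw [interior_Icc] at hx
      exact ((FF_hasDeriv (by simp at hx; linarith [hx.1])).differentiableAt).differentiableWithinAt
    · intro x hx
      rw [interior_Icc] at hx
      simp only [Set.mem_Ioo] at hx
      rw [(FF_hasDeriv (by linarith [hx.1])).deriv]
      apply div_nonpos_of_nonpos_of_nonneg
      · nlinarith [hx.1, hx.2]
      · exact pow_nonneg (by linarith [hx.1]) 3
  intro x hx
  simp only [Set.mem_Icc] at hx
  rcases le_total x 1 with h | h
  · have := hmono (Set.mem_Icc.2 ⟨le_refl 0, by norm_num⟩) (Set.mem_Icc.2 ⟨hx.1, h⟩) hx.1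
    linarith
  · have := hanti (Set.mem_Icc.2 ⟨h, hx.2⟩) (Set.mem_Icc.2 ⟨by norm_num, le_refl 2⟩) hx.2
    linarith

lemma key_mono : MonotoneOn (fun t => ff t / t) (Set.Ioc (0:ℝ) 2) := by
  apply monotoneOn_of_deriv_nonneg (convex_Ioc 0 2)
  · intro x hx
    simp only [Set.mem_Ioc] at hx
    exact (((ff_hasDeriv (by linarith [hx.1])).div (hasDerivAt_id x)
      (ne_of_gt hx.1)).continuousAt).continuousWithinAt
  · intro x hx
    rw [interior_Ioc] at hx
    simp only [Set.mem_Ioo] at hx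
    exact (((ff_hasDeriv (by linarith [hx.1])).div (hasDerivAt_id x)
      (ne_of_gt hx.1)).differentiableAt).differentiableWithinAt
  · intro x hx
    rw [interior_Ioc] at hx
    simp only [Set.mem_Ioo] at hx
    have hx0 := hx.1
    have hd := (ff_hasDeriv (x := x) (by linarith)).div (hasDerivAt_id x) (ne_of_gt hx0)
    simp only [id_eq, id] at hd
    rw [show deriv (fun t => ff t / t) x = _ from hd.deriv]
    have hFF := FF_nonneg x (Set.mem_Icc.2 ⟨hx0.le, hx.2.le⟩)
    have hkey : x / (1+x)^2 * x - ff x * 1 = FF x := by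
      simp only [ff, FF]
      field_simp
      ring
    rw [hkey]
    positivity

lemma key {x y : ℝ} (hy : 0 < y) (hyx : y ≤ x) (hx2 : x ≤ 2) : x * ff y ≤ y * ff x := by
  have h := key_mono (Set.mem_Ioc.2 ⟨hy, le_trans hyx hx2⟩) (Set.mem_Ioc.2 ⟨lt_of_lt_of_le hy hyx, hx2⟩) hyx
  rw [div_le_div_iff₀ hy (lt_of_lt_of_le hy hyx)] at h
  linarith

lemma ff_1310 : ff (13/10) = Real.log (23/10) - 13/23 := by
  norm_num [ff]

lemma caseB {x : ℝ} (h2 : 2 ≤ x) (h47 : x ≤ 47/20) :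
    (10/13) * ff (13/10) * x ≤ ff x := by
  set ρ : ℝ := (10/13) * ff (13/10) with hρ
  have hρle : ρ ≤ 940/4489 := by
    rw [hρ, ff_1310]
    linarith [L4]
  have hmono : MonotoneOn (fun t => ff t - ρ * t) (Set.Icc (2:ℝ) (47/20)) := by
    apply monotoneOn_of_deriv_nonneg (convex_Icc 2 (47/20))
    · intro t ht
      simp only [Set.mem_Icc] at ht
      exact (((ff_hasDeriv (by linarith [ht.1])).sub
        ((hasDerivAt_id t).const_mul ρ)).continuousAt).continuousWithinAt
    · intro t ht
      rw [interior_Icc] at ht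
      simp only [Set.mem_Ioo] at ht
      exact (((ff_hasDeriv (by linarith [ht.1])).sub
        ((hasDerivAt_id t).const_mul ρ)).differentiableAt).differentiableWithinAt
    · intro t ht
      rw [interior_Icc] at ht
      simp only [Set.mem_Ioo] at ht
      have hd := (ff_hasDeriv (x := t) (by linarith [ht.1])).sub ((hasDerivAt_id t).const_mul ρ)
      simp only [id_eq, id] at hd
      rw [show deriv (fun t => ff t - ρ * t) t = _ from hd.deriv]
      simp only [mul_one]
      have ht1 : (0:ℝ) < (1+t)^2 := by nlinarith [ht.1]
      have hfrac : (940:ℝ)/4489 ≤ t/(1+t)^2 := by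
        rw [le_div_iff₀ ht1]
        nlinarith [ht.1, ht.2, mul_nonneg (sub_nonneg.2 ht.2.le) (sub_nonneg.2 (show (20:ℝ)/47 ≤ t by linarith [ht.1]))]
      linarith
  have h0 : 0 ≤ ff 2 - ρ * 2 := by
    have hff2 : ff 2 = Real.log 3 - 2/3 := by norm_num [ff]
    rw [hff2, hρ, ff_1310]
    linarith [L6]
  have := hmono (Set.mem_Icc.2 ⟨le_refl 2, by linarith⟩) (Set.mem_Icc.2 ⟨h2, h47⟩) h2
  simp only at this
  linarith

theorem stmt17 (ε : ℝ) (hε : 0 < ε) (hε' : ε ≤ 1 / 2) (N : ℕ) (hN : 1 ≤ N)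
    (γ : ℕ → ℝ)
    (hγ : ∀ n : ℕ, 1 ≤ n → n ≤ N → 0 < γ n ∧
      (n : ℝ) * (Real.log (1 + γ n) - γ n / (1 + γ n)) = 2 * ε ^ 2) :
    ∀ n : ℕ, 1 ≤ n → n ≤ N → (n : ℝ) * γ n ≤ (N : ℝ) * γ N := by
  intro n hn1 hnN
  obtain ⟨hxpos, hxeq⟩ := hγ n hn1 hnN
  obtain ⟨hypos, hyeq⟩ := hγ N hN (le_refl N)
  set x := γ n with hxdef
  set y := γ N with hydef
  have hfx : (n:ℝ) * ff x = 2 * ε ^ 2 := hxeq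
  have hfy : (N:ℝ) * ff y = 2 * ε ^ 2 := hyeq
  have hc : 2 * ε ^ 2 ≤ 1/2 := by nlinarith
  have hn0 : (0:ℝ) < (n:ℝ) := by exact_mod_cast hn1
  have hN0 : (0:ℝ) < (N:ℝ) := by exact_mod_cast hN
  have hnN' : (n:ℝ) ≤ (N:ℝ) := by exact_mod_cast hnN
  have hfxpos : 0 < ff x := ff_pos hxpos
  have hfypos : 0 < ff y := ff_pos hypos
  have hfyx : ff y ≤ ff x := by nlinarith
  have hyx : y ≤ x := by
    by_contra hcon
    push_neg at hcon
    have := ff_mono (Set.mem_Ici.2 hxpos.le) (Set.mem_Ici.2 (by linarith : (0:ℝ) ≤ y)) hcon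
    linarith
  rcases le_or_gt x 2 with hx2 | hx2
  · have hkey := key hypos hyx hx2
    have h1 : (n:ℝ) * x * ff y ≤ (N:ℝ) * y * ff y := by nlinarith
    exact le_of_mul_le_mul_right (by linarith) hfypos
  · -- x > 2
    have hff2 : ff 2 = Real.log 3 - 2/3 := by norm_num [ff]
    have hff2q : (1:ℝ)/4 ≤ ff 2 := by rw [hff2]; linarith [L2]
    have hffx2 : ff 2 < ff x :=
      ff_mono (Set.mem_Ici.2 (by norm_num)) (Set.mem_Ici.2 hxpos.le) hx2
    have hne1 : n = 1 := by
      by_contra hcon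
      have h2n : 2 ≤ n := by omega
      have h2n' : (2:ℝ) ≤ (n:ℝ) := by exact_mod_cast h2n
      nlinarith
    subst hne1
    simp only [Nat.cast_one, one_mul] at hfx ⊢
    by_cases hN1 : N = 1
    · subst hN1
      simp only [Nat.cast_one, one_mul]
      exact le_of_eq rfl
    · have h2N : 2 ≤ N := by omega
      have h2N' : (2:ℝ) ≤ (N:ℝ) := by exact_mod_cast h2N
      have hffy14 : ff y ≤ 1/4 := by nlinarith
      have hff1310 : (1:ℝ)/4 ≤ ff (13/10) := by rw [ff_1310]; linarith [L3]
      have hy1310 : y ≤ 13/10 := by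
        by_contra hcon
        push_neg at hcon
        have := ff_mono (Set.mem_Ici.2 (by norm_num : (0:ℝ) ≤ 13/10))
          (Set.mem_Ici.2 hypos.le) hcon
        linarith
      have hff4720 : (1:ℝ)/2 ≤ ff (47/20) := by
        have h : ff (47/20) = Real.log (67/20) - 47/67 := by norm_num [ff]
        rw [h]; linarith [L5]
      have hx4720 : x ≤ 47/20 := by
        by_contra hcon
        push_neg at hcon
        have := ff_mono (Set.mem_Ici.2 (by norm_num : (0:ℝ) ≤ 47/20))
          (Set.mem_Ici.2 hxpos.le) hcon
        linarith
      have hkey := key hypos hy1310 (by norm_num : (13:ℝ)/10 ≤ 2)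
      have hB := caseB hx2.le hx4720
      obtain ⟨ρ, hρ⟩ : ∃ ρ : ℝ, ρ = (10:ℝ)/13 * ff (13/10) := ⟨_, rfl⟩
      rw [← hρ] at hB
      have hρpos : 0 < ρ := by
        rw [hρ]
        have := ff_pos (show (0:ℝ) < 13/10 by norm_num)
        positivity
      have h3 : ff y ≤ y * ρ := by rw [hρ]; linarith
      have h3' := mul_le_mul_of_nonneg_left h3 hN0.le
      have h3'' : (N:ℝ) * (y * ρ) = (N:ℝ) * y * ρ := by ring
      have h4 : x * ρ ≤ (N:ℝ) * y * ρ := by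
        have hxρ : ρ * x = x * ρ := by ring
        linarith
      exact le_of_mul_le_mul_right h4 hρpos
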